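/- Let μ and ν be atomless probability measures on ℝ with finite first moments, and let f < x < g and K₂ < K₁ be reals with f < K₂, x < K₁ < g. Suppose the mass and mean equations hold: μ((f,x)) = ν((f,g)) and ∫_{(f,x)} w dμ(w) = ∫_{(f,g)} w dν(w), and that Θ := (K₂ − f)/(g − f) satisfies Θ = (K₁ − x)/(g − x). Then ∫_{(−∞,x)} (K₁ − w) dμ(w) + ∫_{(−∞,f)} (K₂ − w) dν(w) − ∫_{(−∞,f)} (K₂ − w) dμ(w) = Θ·P_ν(g) + (1 − Θ)·P_ν(f) + (1 − Θ)·(P_μ(x) − P_μ(f)); i.e. the model-based expected payoff of the American put equals the superhedging cost. -/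

import Mathlib

open MeasureTheory Set

/-- The put price function `P_η(k) = ∫ (k-x)⁺ dη(x)`. -/
noncomputable def putPrice (η : Measure ℝ) (k : ℝ) : ℝ := ∫ x, max (k - x) 0 ∂η

/-- `π` is a martingale coupling of `μ` and `ν`. -/
def IsMartingaleCoupling (μ ν : Measure ℝ) (π : Measure (ℝ × ℝ)) : Prop :=
  IsProbabilityMeasure π ∧ π.map Prod.fst = μ ∧ π.map Prod.snd = ν ∧
    ∀ B : Set ℝ, MeasurableSet B →
      ∫ p in B ×ˢ (Set.univ : Set ℝ), p.2 ∂π = ∫ x in B, x ∂μ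

/-- The American-put payoff under coupling `π` and exercise set `B`. -/
noncomputable def amPayoff (K₁ K₂ : ℝ) (π : Measure (ℝ × ℝ)) (B : Set ℝ) : ℝ :=
  ∫ p, (B.indicator (fun x => max (K₁ - x) 0) p.1
      + Bᶜ.indicator (fun _ => max (K₂ - p.2) 0) p.1) ∂π

lemma putPrice_eq (η : Measure ℝ) [IsFiniteMeasure η] (hint : Integrable (fun w => w) η)
    (k : ℝ) : putPrice η k = k * (η (Iio k)).toReal - ∫ w in Iio k, w ∂η := by
  have h1 : (fun w => max (k - w) 0) = (Iio k).indicator (fun w => k - w) := by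
    funext w
    by_cases h : w < k
    · simp [indicator_of_mem, h, max_eq_left (sub_nonneg.2 h.le)]
    · simp [indicator_of_notMem, h, max_eq_right (sub_nonpos.2 (not_lt.1 h))]
  rw [putPrice, h1, integral_indicator measurableSet_Iio,
    integral_sub (integrable_const k).integrableOn hint.integrableOn, setIntegral_const,
    smul_eq_mul, mul_comm, measureReal_def]

lemma measure_split (η : Measure ℝ) [IsFiniteMeasure η] [NullSingletonClass η] {a b : ℝ} (hab : a ≤ b) :
    (η (Iio b)).toReal = (η (Iio a)).toReal + (η (Ioo a b)).toReal := by
  have hd : Disjoint (Iio a) (Ico a b) :=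
    (Iio_disjoint_Ici le_rfl).mono_right Ico_subset_Ici_self
  rw [← Iio_union_Ico_eq_Iio hab, measure_union hd measurableSet_Ico,
    ← measure_congr (Ioo_ae_eq_Ico (μ := η) (a := a) (b := b)),
    ENNReal.toReal_add (measure_ne_top _ _) (measure_ne_top _ _)]

lemma integral_split (η : Measure ℝ) [NullSingletonClass η] (hint : Integrable (fun w => w) η)
    {a b : ℝ} (hab : a ≤ b) :
    ∫ w in Iio b, w ∂η = (∫ w in Iio a, w ∂η) + ∫ w in Ioo a b, w ∂η := by
  have hd : Disjoint (Iio a) (Ico a b) :=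
    (Iio_disjoint_Ici le_rfl).mono_right Ico_subset_Ici_self
  rw [← Iio_union_Ico_eq_Iio hab,
    setIntegral_union hd measurableSet_Ico hint.integrableOn hint.integrableOn,
    setIntegral_congr_set (μ := η) (Ioo_ae_eq_Ico (a := a) (b := b))]

lemma sub_integral (η : Measure ℝ) [IsFiniteMeasure η] (hint : Integrable (fun w => w) η)
    (c : ℝ) (s : Set ℝ) :
    ∫ w in s, (c - w) ∂η = c * (η s).toReal - ∫ w in s, w ∂η := by
  rw [integral_sub (integrable_const c).integrableOn hint.integrableOn, setIntegral_const,
    smul_eq_mul, mul_comm, measureReal_def]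

/-- Under the mass and mean equations and the slope condition defining `Θ`, the
model-based expected payoff of the American put equals the superhedging cost. -/
theorem mbep_eq_hedging_cost
    (μ ν : Measure ℝ) [IsProbabilityMeasure μ] [IsProbabilityMeasure ν]
    (hμint : Integrable (fun w => w) μ) (hνint : Integrable (fun w => w) ν)
    (hμa : ∀ w : ℝ, μ {w} = 0) (hνa : ∀ w : ℝ, ν {w} = 0)
    (f x g K₁ K₂ : ℝ)
    (hfx : f < x) (hxg : x < g) (hK : K₂ < K₁)
    (hfK₂ : f < K₂) (hxK₁ : x < K₁) (hK₁g : K₁ < g)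
    (hmass : μ (Set.Ioo f x) = ν (Set.Ioo f g))
    (hmean : ∫ w in Set.Ioo f x, w ∂μ = ∫ w in Set.Ioo f g, w ∂ν)
    (hΘ : (K₂ - f) / (g - f) = (K₁ - x) / (g - x)) :
    (∫ w in Set.Iio x, (K₁ - w) ∂μ) + (∫ w in Set.Iio f, (K₂ - w) ∂ν)
        - (∫ w in Set.Iio f, (K₂ - w) ∂μ)
      = ((K₂ - f) / (g - f)) * putPrice ν g
        + (1 - (K₂ - f) / (g - f)) * putPrice ν f
        + (1 - (K₂ - f) / (g - f)) * (putPrice μ x - putPrice μ f) := by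
  haveI : NullSingletonClass μ := ⟨hμa⟩
  haveI : NullSingletonClass ν := ⟨hνa⟩
  have hgf : g - f ≠ 0 := by linarith
  have hgx : g - x ≠ 0 := by linarith
  have h1 : (K₂ - f) / (g - f) * (g - f) = K₂ - f := div_mul_cancel₀ _ hgf
  have h2 : (K₂ - f) / (g - f) * (g - x) = K₁ - x := by rw [hΘ]; exact div_mul_cancel₀ _ hgx
  have hmass' : (μ (Set.Ioo f x)).toReal = (ν (Set.Ioo f g)).toReal := by rw [hmass]
  rw [sub_integral μ hμint, sub_integral ν hνint, sub_integral μ hμint,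
    putPrice_eq ν hνint, putPrice_eq ν hνint, putPrice_eq μ hμint, putPrice_eq μ hμint,
    measure_split μ hfx.le, measure_split ν (hfx.trans hxg).le,
    integral_split μ hμint hfx.le, integral_split ν hνint (hfx.trans hxg).le,
    hmass', hmean]
  linear_combination ((μ (Set.Iio f)).toReal - (ν (Set.Iio f)).toReal) * h1
    - ((μ (Set.Iio f)).toReal + (ν (Set.Ioo f g)).toReal) * h2
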